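/- Let I ⊂ ℕ be infinite and h > 0. If #(B(y,r) ∩ I) ≍ r^h for all y ∈ I and 1 ≤ r ≤ y/2, and there exists m with [k, mk] ∩ I ≠ ∅ for all k, then for every t > h/2 the series ∑_{i∈I, i>k} i^{−2t} converges and is comparable to k^{h−2t}, while for t ≤ h/2 the series ∑_{i∈I} i^{−2t} diverges. -/

import Mathlib

open Real Set

lemma aux_fin (s : Set ℕ) (X : ℝ) (hs : ∀ i ∈ s, (i : ℝ) ≤ X) : s.Finite := by
  apply Set.Finite.subset (Set.finite_Iic ⌈X⌉₊)
  intro i hi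
  have h1 : (i : ℝ) ≤ X := hs i hi
  have h2 : X ≤ (⌈X⌉₊ : ℝ) := Nat.le_ceil X
  have : (i : ℝ) ≤ (⌈X⌉₊ : ℝ) := h1.trans h2
  exact_mod_cast this

lemma aux_block (I : Set ℕ) (h C : ℝ) (hh : 0 < h) (hC : 0 < C)
    (hcu : ∀ y ∈ I, ∀ r : ℝ, 1 ≤ r → r ≤ (y : ℝ) / 2 →
      ({i ∈ I | (y : ℝ) - r ≤ (i : ℝ) ∧ (i : ℝ) ≤ (y : ℝ) + r}.ncard : ℝ) ≤ C * r ^ h)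
    (a : ℕ) (ha : 1 ≤ a) :
    ({i : ℕ | i ∈ I ∧ a < i ∧ i ≤ 2*a}.ncard : ℝ) ≤ (2*C+2) * (a:ℝ)^h := by
  classical
  have ha0 : (0:ℝ) < a := by exact_mod_cast ha
  have hah : (0:ℝ) < (a:ℝ)^h := Real.rpow_pos_of_pos ha0 h
  set S := {i : ℕ | i ∈ I ∧ a < i ∧ i ≤ 2*a} with hS
  have hSfin : S.Finite := by
    apply aux_fin _ ((2*a : ℕ) : ℝ)
    intro i hi
    exact_mod_cast hi.2.2
  rcases eq_or_lt_of_le ha with h1 | h2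
  · -- a = 1
    have hsub : S ⊆ {2} := by
      intro i hi
      have := hi.2.1
      have := hi.2.2
      simp only [Set.mem_singleton_iff]
      omega
    have : S.ncard ≤ ({2} : Set ℕ).ncard := Set.ncard_le_ncard hsub (Set.finite_singleton 2)
    have h2' : (S.ncard : ℝ) ≤ 1 := by
      rw [Set.ncard_singleton] at this
      exact_mod_cast this
    have : (1:ℝ) ≤ (2*C+2) * (a:ℝ)^h := by
      have hha : (1:ℝ) ≤ (a:ℝ)^h := by
        rw [← h1]; simp
      nlinarith
    linarith
  · -- 2 ≤ a
    have ha2 : (2:ℝ) ≤ a := by exact_mod_cast h2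
    have hr1 : (1:ℝ) ≤ (a:ℝ)/2 := by linarith
    set S1 := {i ∈ S | (i:ℝ) ≤ (a:ℝ) + (a:ℝ)/2} with hS1
    set S2 := {i ∈ S | ¬ ((i:ℝ) ≤ (a:ℝ) + (a:ℝ)/2)} with hS2
    have hcover : S = S1 ∪ S2 := by
      ext i
      constructor
      · intro hi
        by_cases hc : (i:ℝ) ≤ (a:ℝ) + (a:ℝ)/2
        · exact Or.inl ⟨hi, hc⟩
        · exact Or.inr ⟨hi, hc⟩
      · rintro (⟨hi, -⟩ | ⟨hi, -⟩) <;> exact hi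
    have hfin1 : S1.Finite := hSfin.subset (fun i hi => hi.1)
    have hfin2 : S2.Finite := hSfin.subset (fun i hi => hi.1)
    -- generic bound for a subset whose elements lie within a/2 of a point of I
    have key : ∀ (T : Set ℕ), T ⊆ S →
        (∀ i ∈ T, ∀ j ∈ T, |(i:ℝ) - (j:ℝ)| ≤ (a:ℝ)/2) →
        (T.ncard : ℝ) ≤ C * (a:ℝ)^h := by
      intro T hTS hdiam
      rcases T.eq_empty_or_nonempty with hT | ⟨i0, hi0⟩
      · rw [hT]
        simp only [Set.ncard_empty, Nat.cast_zero]
        positivity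
      · have hi0S := hTS hi0
        have hi0I : i0 ∈ I := hi0S.1
        have hai0 : (a:ℝ) ≤ (i0:ℝ) := by exact_mod_cast hi0S.2.1.le
        have hr2 : (a:ℝ)/2 ≤ (i0:ℝ)/2 := by linarith
        have hball := hcu i0 hi0I ((a:ℝ)/2) hr1 hr2
        have hTsub : T ⊆ {i ∈ I | (i0 : ℝ) - (a:ℝ)/2 ≤ (i : ℝ) ∧ (i : ℝ) ≤ (i0 : ℝ) + (a:ℝ)/2} := by
          intro i hi
          have hd := hdiam i hi i0 hi0
          rw [abs_le] at hd
          exact ⟨(hTS hi).1, by linarith [hd.1, hd.2], by linarith [hd.1, hd.2]⟩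
        have hBfin : ({i ∈ I | (i0 : ℝ) - (a:ℝ)/2 ≤ (i : ℝ) ∧ (i : ℝ) ≤ (i0 : ℝ) + (a:ℝ)/2}).Finite := by
          apply aux_fin _ ((i0:ℝ) + (a:ℝ)/2)
          intro i hi; exact hi.2.2
        have := Set.ncard_le_ncard hTsub hBfin
        calc (T.ncard : ℝ) ≤ _ := by exact_mod_cast this
          _ ≤ C * ((a:ℝ)/2) ^ h := hball
          _ ≤ C * (a:ℝ)^h := by
            apply mul_le_mul_of_nonneg_left _ hC.le
            exact Real.rpow_le_rpow (by linarith) (by linarith) hh.le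
    have hb1 : (S1.ncard : ℝ) ≤ C * (a:ℝ)^h := by
      apply key S1 (fun i hi => hi.1)
      intro i hi j hj
      have hiS := hi.1; have hjS := hj.1
      have h1 : (a:ℝ) ≤ (i:ℝ) := by exact_mod_cast hiS.2.1.le
      have h2 : (a:ℝ) ≤ (j:ℝ) := by exact_mod_cast hjS.2.1.le
      rw [abs_le]
      constructor <;> [linarith [hi.2, hj.2]; linarith [hi.2, hj.2]]
    have hb2 : (S2.ncard : ℝ) ≤ C * (a:ℝ)^h := by
      apply key S2 (fun i hi => hi.1)
      intro i hi j hj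
      have hiS := hi.1; have hjS := hj.1
      have h1 : (i:ℝ) ≤ 2*(a:ℝ) := by exact_mod_cast hiS.2.2
      have h2 : (j:ℝ) ≤ 2*(a:ℝ) := by exact_mod_cast hjS.2.2
      have h3 : (a:ℝ) + (a:ℝ)/2 < (i:ℝ) := lt_of_not_ge hi.2
      have h4 : (a:ℝ) + (a:ℝ)/2 < (j:ℝ) := lt_of_not_ge hj.2
      rw [abs_le]
      constructor <;> linarith
    have hunion : (S.ncard : ℝ) ≤ (S1.ncard : ℝ) + (S2.ncard : ℝ) := by
      rw [hcover]
      have := Set.ncard_union_le S1 S2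
      exact_mod_cast this
    calc (S.ncard : ℝ) ≤ (S1.ncard : ℝ) + (S2.ncard : ℝ) := hunion
      _ ≤ C * (a:ℝ)^h + C * (a:ℝ)^h := add_le_add hb1 hb2
      _ ≤ (2*C+2) * (a:ℝ)^h := by nlinarith

lemma aux_low (I : Set ℕ) (h c : ℝ) (hh : 0 < h) (hc : 0 < c)
    (hcl : ∀ y ∈ I, ∀ r : ℝ, 1 ≤ r → r ≤ (y : ℝ) / 2 →
      c * r ^ h ≤ ({i ∈ I | (y : ℝ) - r ≤ (i : ℝ) ∧ (i : ℝ) ≤ (y : ℝ) + r}.ncard : ℝ))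
    (m : ℕ) (hm : ∀ k : ℕ, 1 ≤ k → ∃ i ∈ I, k ≤ i ∧ i ≤ m * k)
    (k : ℕ) (hk : 1 ≤ k) :
    ∃ F : Finset ℕ, (∀ i ∈ F, i ∈ I ∧ 2*k ≤ i ∧ i ≤ 6*m*k) ∧
      c * (2*(k:ℝ))^h ≤ (F.card : ℝ) := by
  classical
  obtain ⟨y, hyI, hy1, hy2⟩ := hm (4*k) (by omega)
  have hk0 : (1:ℝ) ≤ (k:ℝ) := by exact_mod_cast hk
  have hy4 : 4*(k:ℝ) ≤ (y:ℝ) := by exact_mod_cast hy1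
  have hy2' : (y:ℝ) ≤ (m:ℝ)*(4*(k:ℝ)) := by exact_mod_cast hy2
  have hr1 : (1:ℝ) ≤ (y:ℝ)/2 := by linarith
  have hball := hcl y hyI ((y:ℝ)/2) hr1 le_rfl
  set S := {i ∈ I | (y:ℝ) - (y:ℝ)/2 ≤ (i:ℝ) ∧ (i:ℝ) ≤ (y:ℝ) + (y:ℝ)/2} with hSdef
  have hSfin : S.Finite := by
    apply aux_fin _ ((y:ℝ) + (y:ℝ)/2)
    intro i hi; exact hi.2.2
  refine ⟨hSfin.toFinset, ?_, ?_⟩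
  · intro i hi
    rw [Set.Finite.mem_toFinset] at hi
    obtain ⟨hiI, hi1, hi2⟩ := hi
    refine ⟨hiI, ?_, ?_⟩
    · have : 2*(k:ℝ) ≤ (i:ℝ) := by linarith
      exact_mod_cast this
    · have : (i:ℝ) ≤ 6*(m:ℝ)*(k:ℝ) := by nlinarith
      have : (i:ℝ) ≤ ((6*m*k : ℕ) : ℝ) := by push_cast; linarith
      exact_mod_cast this
  · have hcard : S.ncard = hSfin.toFinset.card := Set.ncard_eq_toFinset_card S hSfin
    calc c * (2*(k:ℝ))^h ≤ c * ((y:ℝ)/2)^h := by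
          apply mul_le_mul_of_nonneg_left _ hc.le
          exact Real.rpow_le_rpow (by linarith) (by linarith) hh.le
      _ ≤ (S.ncard : ℝ) := hball
      _ = (hSfin.toFinset.card : ℝ) := by rw [hcard]

lemma aux_partial (I : Set ℕ) (h C : ℝ) (hh : 0 < h) (hC : 0 < C)
    (hcu : ∀ y ∈ I, ∀ r : ℝ, 1 ≤ r → r ≤ (y : ℝ) / 2 →
      ({i ∈ I | (y : ℝ) - r ≤ (i : ℝ) ∧ (i : ℝ) ≤ (y : ℝ) + r}.ncard : ℝ) ≤ C * r ^ h)
    (e : ℝ) (he : h < e) (k : ℕ) (hk : 1 ≤ k) :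
    ∀ N : ℕ, ∑ i ∈ Finset.range N, ({i : ℕ | i ∈ I ∧ k < i}).indicator (fun i => (i:ℝ)^(-e)) i
      ≤ ((2*C+2) * (1 - (2:ℝ)^(h-e))⁻¹) * (k:ℝ)^(h-e) := by
  classical
  set f : ℕ → ℝ := ({i : ℕ | i ∈ I ∧ k < i}).indicator (fun i => (i:ℝ)^(-e)) with hf
  have he0 : 0 < e := hh.trans he
  have hfnn : ∀ i, 0 ≤ f i := by
    intro i
    apply Set.indicator_nonneg
    intro j _
    positivity
  set r : ℝ := (2:ℝ)^(h-e) with hrdef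
  have hr0 : 0 ≤ r := Real.rpow_nonneg (by norm_num) _
  have hr1 : r < 1 := Real.rpow_lt_one_of_one_lt_of_neg one_lt_two (by linarith)
  -- block sums
  have hblock : ∀ a : ℕ, 1 ≤ a →
      ∑ i ∈ Finset.Ioc a (2*a), f i ≤ (2*C+2) * (a:ℝ)^(h-e) := by
    intro a ha
    have ha0 : (0:ℝ) < a := by exact_mod_cast ha
    have step1 : ∑ i ∈ Finset.Ioc a (2*a), f i
        ≤ ∑ i ∈ Finset.Ioc a (2*a), (if i ∈ I then (a:ℝ)^(-e) else 0) := by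
      apply Finset.sum_le_sum
      intro i hi
      rw [Finset.mem_Ioc] at hi
      by_cases hiI : i ∈ I ∧ k < i
      · rw [hf, Set.indicator_of_mem (show i ∈ {i : ℕ | i ∈ I ∧ k < i} from hiI)]
        rw [if_pos hiI.1]
        apply Real.rpow_le_rpow_of_nonpos ha0 _ (by linarith)
        exact_mod_cast hi.1.le
      · rw [hf, Set.indicator_of_notMem (show i ∉ {i : ℕ | i ∈ I ∧ k < i} from hiI)]
        split
        · positivity
        · exact le_refl 0
    have step2 : ∑ i ∈ Finset.Ioc a (2*a), (if i ∈ I then (a:ℝ)^(-e) else 0)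
        = (((Finset.Ioc a (2*a)).filter (· ∈ I)).card : ℝ) * (a:ℝ)^(-e) := by
      rw [← Finset.sum_filter, Finset.sum_const, nsmul_eq_mul]
    have step3 : (((Finset.Ioc a (2*a)).filter (· ∈ I)).card : ℝ) ≤ (2*C+2) * (a:ℝ)^h := by
      have hcoe : (((Finset.Ioc a (2*a)).filter (· ∈ I)) : Set ℕ)
          = {i : ℕ | i ∈ I ∧ a < i ∧ i ≤ 2*a} := by
        ext i
        simp only [Finset.coe_filter, Finset.mem_Ioc, Set.mem_setOf_eq]
        tauto
      have := aux_block I h C hh hC hcu a ha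
      rw [← hcoe, Set.ncard_coe_finset] at this
      exact this
    have hae : (0:ℝ) ≤ (a:ℝ)^(-e) := Real.rpow_nonneg ha0.le _
    calc ∑ i ∈ Finset.Ioc a (2*a), f i
        ≤ (((Finset.Ioc a (2*a)).filter (· ∈ I)).card : ℝ) * (a:ℝ)^(-e) := by
          rw [← step2]; exact step1
      _ ≤ ((2*C+2) * (a:ℝ)^h) * (a:ℝ)^(-e) := mul_le_mul_of_nonneg_right step3 hae
      _ = (2*C+2) * (a:ℝ)^(h-e) := by
          rw [mul_assoc, ← Real.rpow_add ha0, sub_eq_add_neg]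
  -- power identity
  have hpr : ∀ n : ℕ, (((2:ℝ)^n : ℝ))^(h-e) = r^n := by
    intro n
    rw [← Real.rpow_natCast 2 n, ← Real.rpow_natCast r n, hrdef,
      ← Real.rpow_mul (by norm_num), ← Real.rpow_mul (by norm_num), mul_comm]
  have hk0 : (0:ℝ) < (k:ℝ) := by exact_mod_cast hk
  have hkhe : (0:ℝ) ≤ (k:ℝ)^(h-e) := Real.rpow_nonneg hk0.le _
  -- dyadic
  have hdyad : ∀ n : ℕ, ∑ i ∈ Finset.Ioc k (2^n * k), f i
      ≤ (2*C+2) * (k:ℝ)^(h-e) * ∑ j ∈ Finset.range n, r^j := by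
    intro n
    induction n with
    | zero => simp
    | succ n ih =>
      have h1 : k ≤ 2^n * k := Nat.le_mul_of_pos_left k (Nat.pow_pos (by norm_num))
      have h2 : 2^n * k ≤ 2^(n+1) * k := by
        apply Nat.mul_le_mul_right
        exact Nat.pow_le_pow_right (by norm_num) (by omega)
      rw [← Finset.sum_Ioc_consecutive f h1 h2]
      have hblk : ∑ i ∈ Finset.Ioc (2^n*k) (2^(n+1)*k), f i
          ≤ (2*C+2) * (k:ℝ)^(h-e) * r^n := by
        have ha1 : 1 ≤ 2^n * k := le_trans hk h1
        have heq : 2^(n+1)*k = 2*(2^n*k) := by ring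
        have := hblock (2^n*k) ha1
        rw [← heq] at this
        refine this.trans (le_of_eq ?_)
        have hcast : ((2^n*k : ℕ) : ℝ) = ((2:ℝ)^n) * (k:ℝ) := by push_cast; ring
        rw [hcast, Real.mul_rpow (by positivity) hk0.le, hpr n]
        ring
      have := add_le_add ih hblk
      refine this.trans (le_of_eq ?_)
      rw [Finset.sum_range_succ]
      ring
  -- geometric bound
  have hgeom : ∀ n : ℕ, ∑ j ∈ Finset.range n, r^j ≤ (1-r)⁻¹ := by
    intro n
    have := (summable_geometric_of_lt_one hr0 hr1).sum_le_tsum (Finset.range n) (fun i _ => pow_nonneg hr0 i)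
    rwa [tsum_geometric_of_lt_one hr0 hr1] at this
  have hEpos : (0:ℝ) ≤ (2*C+2) * (k:ℝ)^(h-e) := by positivity
  have hbound : ∀ n : ℕ, ∑ i ∈ Finset.Ioc k (2^n * k), f i
      ≤ ((2*C+2) * (1-r)⁻¹) * (k:ℝ)^(h-e) := by
    intro n
    refine (hdyad n).trans ?_
    calc (2*C+2) * (k:ℝ)^(h-e) * ∑ j ∈ Finset.range n, r^j
        ≤ (2*C+2) * (k:ℝ)^(h-e) * (1-r)⁻¹ :=
          mul_le_mul_of_nonneg_left (hgeom n) hEpos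
      _ = ((2*C+2) * (1-r)⁻¹) * (k:ℝ)^(h-e) := by ring
  intro N
  set M := 2^N * k with hM
  have hNM : N ≤ M := by
    have h1 : N < 2^N := Nat.lt_two_pow_self
    have h2 : 2^N ≤ 2^N * k := Nat.le_mul_of_pos_right _ (by omega)
    omega
  have hkM : k ≤ M := Nat.le_mul_of_pos_left k (Nat.pow_pos (by norm_num))
  have hsub : Finset.Ioc k M ⊆ Finset.range (M+1) := by
    intro i hi
    rw [Finset.mem_Ioc] at hi
    rw [Finset.mem_range]
    omega
  have hzero : ∀ x ∈ Finset.range (M+1), x ∉ Finset.Ioc k M → f x = 0 := by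
    intro x hx hnx
    rw [Finset.mem_range] at hx
    rw [Finset.mem_Ioc] at hnx
    have hxk : ¬ (k < x) := by omega
    rw [hf]
    apply Set.indicator_of_notMem
    intro hmem
    exact hxk hmem.2
  calc ∑ i ∈ Finset.range N, f i
      ≤ ∑ i ∈ Finset.range (M+1), f i := by
        apply Finset.sum_le_sum_of_subset_of_nonneg
        · exact Finset.range_subset_range.2 (by omega)
        · intro i _ _; exact hfnn i
    _ = ∑ i ∈ Finset.Ioc k M, f i := (Finset.sum_subset hsub hzero).symm
    _ ≤ ((2*C+2) * (1-r)⁻¹) * (k:ℝ)^(h-e) := hbound N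

theorem stmt17 (I : Set ℕ) (hinf : I.Infinite) (h : ℝ) (hh : 0 < h)
    (c C : ℝ) (hc : 0 < c) (hC : 0 < C)
    (hcount : ∀ y ∈ I, ∀ r : ℝ, 1 ≤ r → r ≤ (y : ℝ) / 2 →
      c * r ^ h ≤ ({i ∈ I | (y : ℝ) - r ≤ (i : ℝ) ∧ (i : ℝ) ≤ (y : ℝ) + r}.ncard : ℝ) ∧
      ({i ∈ I | (y : ℝ) - r ≤ (i : ℝ) ∧ (i : ℝ) ≤ (y : ℝ) + r}.ncard : ℝ) ≤ C * r ^ h)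
    (m : ℕ) (hm : ∀ k : ℕ, 1 ≤ k → ∃ i ∈ I, k ≤ i ∧ i ≤ m * k) :
    (∀ t : ℝ, h / 2 < t →
      Summable (fun i : I => ((i : ℕ) : ℝ) ^ (-(2 * t))) ∧
      ∃ c' C' : ℝ, 0 < c' ∧ 0 < C' ∧ ∀ k : ℕ, 1 ≤ k →
        c' * (k : ℝ) ^ (h - 2 * t)
            ≤ ∑' i : {i : ℕ // i ∈ I ∧ k < i}, ((i : ℕ) : ℝ) ^ (-(2 * t)) ∧
        (∑' i : {i : ℕ // i ∈ I ∧ k < i}, ((i : ℕ) : ℝ) ^ (-(2 * t)))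
            ≤ C' * (k : ℝ) ^ (h - 2 * t)) ∧
    (∀ t : ℝ, t ≤ h / 2 → ¬ Summable (fun i : I => ((i : ℕ) : ℝ) ^ (-(2 * t)))) := by
  classical
  have hm1 : 1 ≤ m := by
    obtain ⟨i, -, h1, h2⟩ := hm 1 le_rfl
    omega
  have hcl : ∀ y ∈ I, ∀ r : ℝ, 1 ≤ r → r ≤ (y : ℝ) / 2 →
      c * r ^ h ≤ ({i ∈ I | (y : ℝ) - r ≤ (i : ℝ) ∧ (i : ℝ) ≤ (y : ℝ) + r}.ncard : ℝ) :=
    fun y hy r h1 h2 => (hcount y hy r h1 h2).1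
  have hcu : ∀ y ∈ I, ∀ r : ℝ, 1 ≤ r → r ≤ (y : ℝ) / 2 →
      ({i ∈ I | (y : ℝ) - r ≤ (i : ℝ) ∧ (i : ℝ) ≤ (y : ℝ) + r}.ncard : ℝ) ≤ C * r ^ h :=
    fun y hy r h1 h2 => (hcount y hy r h1 h2).2
  have h6m : (0:ℝ) < 6 * (m:ℝ) := by
    have : (1:ℝ) ≤ (m:ℝ) := by exact_mod_cast hm1
    linarith
  constructor
  · -- convergent case
    intro t ht
    have he : h < 2*t := by linarith
    have he0 : 0 < 2*t := hh.trans he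
    -- summability of tail indicators
    have hsumk : ∀ k : ℕ, 1 ≤ k →
        Summable ({i : ℕ | i ∈ I ∧ k < i}.indicator (fun i : ℕ => (i:ℝ)^(-(2*t)))) := by
      intro k hk
      apply summable_of_sum_range_le
        (fun n => Set.indicator_nonneg (fun j _ => by positivity) n)
      exact aux_partial I h C hh hC hcu (2*t) he k hk
    have htsle : ∀ k : ℕ, 1 ≤ k →
        (∑' i : ℕ, {i : ℕ | i ∈ I ∧ k < i}.indicator (fun i : ℕ => (i:ℝ)^(-(2*t))) i)
          ≤ ((2*C+2) * (1 - (2:ℝ)^(h-2*t))⁻¹) * (k:ℝ)^(h-2*t) := by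
      intro k hk
      apply Real.tsum_le_of_sum_range_le
        (fun n => Set.indicator_nonneg (fun j _ => by positivity) n)
      exact aux_partial I h C hh hC hcu (2*t) he k hk
    -- summability over I
    have hsum1 := hsumk 1 le_rfl
    have hshift : Summable (fun n : ℕ =>
        {i : ℕ | i ∈ I ∧ 1 < i}.indicator (fun i : ℕ => (i:ℝ)^(-(2*t))) (n+2)) :=
      (summable_nat_add_iff 2).2 hsum1
    have hgI : Summable (I.indicator (fun i : ℕ => (i:ℝ)^(-(2*t)))) := by
      rw [← summable_nat_add_iff 2]
      apply hshift.congr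
      intro n
      by_cases hn : (n+2) ∈ I
      · rw [Set.indicator_of_mem (show n+2 ∈ {i : ℕ | i ∈ I ∧ 1 < i} from ⟨hn, by omega⟩),
          Set.indicator_of_mem hn]
      · rw [Set.indicator_of_notMem (show n+2 ∉ {i : ℕ | i ∈ I ∧ 1 < i} from
          fun hmem => hn hmem.1), Set.indicator_of_notMem hn]
    have hsummableI : Summable (fun i : I => ((i : ℕ) : ℝ) ^ (-(2 * t))) :=
      summable_subtype_iff_indicator.mpr hgI
    refine ⟨hsummableI, c * (2:ℝ)^h * (6*(m:ℝ))^(-(2*t)),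
      (2*C+2) * (1 - (2:ℝ)^(h-2*t))⁻¹, ?_, ?_, ?_⟩
    · have : (0:ℝ) < (6*(m:ℝ))^(-(2*t)) := Real.rpow_pos_of_pos h6m _
      have h2h : (0:ℝ) < (2:ℝ)^h := Real.rpow_pos_of_pos (by norm_num) _
      positivity
    · have hr1 : (2:ℝ)^(h-2*t) < 1 :=
        Real.rpow_lt_one_of_one_lt_of_neg one_lt_two (by linarith)
      have : (0:ℝ) < 1 - (2:ℝ)^(h-2*t) := by linarith
      positivity
    · intro k hk
      have hk0 : (0:ℝ) < (k:ℝ) := by exact_mod_cast hk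
      have hts : (∑' i : {i : ℕ // i ∈ I ∧ k < i}, ((i : ℕ) : ℝ) ^ (-(2 * t)))
          = ∑' i : ℕ, {i : ℕ | i ∈ I ∧ k < i}.indicator (fun i : ℕ => (i:ℝ)^(-(2*t))) i :=
        tsum_subtype {i : ℕ | i ∈ I ∧ k < i} (fun i : ℕ => (i:ℝ)^(-(2*t)))
      constructor
      · -- lower bound
        obtain ⟨F, hF, hcard⟩ := aux_low I h c hh hc hcl m hm k hk
        set b : ℝ := ((6*m*k : ℕ) : ℝ)^(-(2*t)) with hb
        have hb0 : (0:ℝ) ≤ b := Real.rpow_nonneg (by positivity) _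
        have hterm : ∀ i ∈ F, b ≤
            {i : ℕ | i ∈ I ∧ k < i}.indicator (fun i : ℕ => (i:ℝ)^(-(2*t))) i := by
          intro i hi
          obtain ⟨hiI, hi1, hi2⟩ := hF i hi
          have hki : k < i := by omega
          rw [Set.indicator_of_mem (show i ∈ {i : ℕ | i ∈ I ∧ k < i} from ⟨hiI, hki⟩)]
          have hi0 : (0:ℝ) < (i:ℝ) := by
            have : 0 < i := by omega
            exact_mod_cast this
          apply Real.rpow_le_rpow_of_nonpos hi0 _ (by linarith)
          exact_mod_cast hi2
        have hsumF : (F.card : ℝ) * b ≤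
            ∑ i ∈ F, {i : ℕ | i ∈ I ∧ k < i}.indicator (fun i : ℕ => (i:ℝ)^(-(2*t))) i := by
          have := Finset.card_nsmul_le_sum F _ b hterm
          rwa [nsmul_eq_mul] at this
        have hFle : ∑ i ∈ F, {i : ℕ | i ∈ I ∧ k < i}.indicator
              (fun i : ℕ => (i:ℝ)^(-(2*t))) i ≤
            ∑' i : ℕ, {i : ℕ | i ∈ I ∧ k < i}.indicator (fun i : ℕ => (i:ℝ)^(-(2*t))) i :=
          (hsumk k hk).sum_le_tsum F (fun i _ => Set.indicator_nonneg (fun j _ => by positivity) i)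
        have hcb : c * (2*(k:ℝ))^h * b ≤ (F.card : ℝ) * b :=
          mul_le_mul_of_nonneg_right hcard hb0
        have halg : c * (2*(k:ℝ))^h * b
            = (c * (2:ℝ)^h * (6*(m:ℝ))^(-(2*t))) * (k:ℝ)^(h-2*t) := by
          rw [hb]
          have hc1 : ((6*m*k : ℕ) : ℝ) = (6*(m:ℝ)) * (k:ℝ) := by push_cast; ring
          rw [hc1, Real.mul_rpow (le_of_lt h6m) hk0.le,
            Real.mul_rpow (by norm_num) hk0.le]
          have : (k:ℝ)^h * (k:ℝ)^(-(2*t)) = (k:ℝ)^(h-2*t) := by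
            rw [← Real.rpow_add hk0]
            ring_nf
          calc c * ((2:ℝ)^h * (k:ℝ)^h) * ((6*(m:ℝ))^(-(2*t)) * (k:ℝ)^(-(2*t)))
              = (c * (2:ℝ)^h * (6*(m:ℝ))^(-(2*t))) * ((k:ℝ)^h * (k:ℝ)^(-(2*t))) := by ring
            _ = (c * (2:ℝ)^h * (6*(m:ℝ))^(-(2*t))) * (k:ℝ)^(h-2*t) := by rw [this]
        rw [hts]
        calc (c * (2:ℝ)^h * (6*(m:ℝ))^(-(2*t))) * (k:ℝ)^(h-2*t)
            = c * (2*(k:ℝ))^h * b := halg.symm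
          _ ≤ (F.card : ℝ) * b := hcb
          _ ≤ _ := hsumF.trans hFle
      · rw [hts]
        exact htsle k hk
  · -- divergent case
    intro t ht hS
    have hgI : Summable (I.indicator (fun i : ℕ => (i:ℝ)^(-(2*t)))) :=
      summable_subtype_iff_indicator.mp hS
    set ε : ℝ := c * (2:ℝ)^h * (6*(m:ℝ))^(-h) with hε
    have hεpos : 0 < ε := by
      have h1 : (0:ℝ) < (6*(m:ℝ))^(-h) := Real.rpow_pos_of_pos h6m _
      have h2 : (0:ℝ) < (2:ℝ)^h := Real.rpow_pos_of_pos (by norm_num) _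
      positivity
    obtain ⟨A, hA⟩ := hgI.vanishing (Iio_mem_nhds hεpos)
    set k : ℕ := A.sup id + 1 with hkdef
    have hk : 1 ≤ k := by omega
    have hk0 : (0:ℝ) < (k:ℝ) := by exact_mod_cast hk
    obtain ⟨F, hF, hcard⟩ := aux_low I h c hh hc hcl m hm k hk
    have hdisj : Disjoint F A := by
      rw [Finset.disjoint_left]
      intro i hi hiA
      obtain ⟨-, h1, -⟩ := hF i hi
      have : i ≤ A.sup id := Finset.le_sup (f := id) hiA
      omega
    have hsmall := hA F hdisj
    rw [Set.mem_Iio] at hsmall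
    set b : ℝ := ((6*m*k : ℕ) : ℝ)^(-h) with hb
    have hb0 : (0:ℝ) ≤ b := Real.rpow_nonneg (by positivity) _
    have hterm : ∀ i ∈ F, b ≤ I.indicator (fun i : ℕ => (i:ℝ)^(-(2*t))) i := by
      intro i hi
      obtain ⟨hiI, hi1, hi2⟩ := hF i hi
      rw [Set.indicator_of_mem hiI]
      have hi0 : (0:ℝ) < (i:ℝ) := by
        have : 0 < i := by omega
        exact_mod_cast this
      have hi1' : (1:ℝ) ≤ (i:ℝ) := by
        have : 1 ≤ i := by omega
        exact_mod_cast this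
      calc b ≤ (i:ℝ)^(-h) := by
            apply Real.rpow_le_rpow_of_nonpos hi0 _ (by linarith)
            exact_mod_cast hi2
        _ ≤ (i:ℝ)^(-(2*t)) :=
            Real.rpow_le_rpow_of_exponent_le hi1' (by linarith)
    have hsumF : (F.card : ℝ) * b ≤ ∑ i ∈ F, I.indicator (fun i : ℕ => (i:ℝ)^(-(2*t))) i := by
      have := Finset.card_nsmul_le_sum F _ b hterm
      rwa [nsmul_eq_mul] at this
    have hcb : c * (2*(k:ℝ))^h * b ≤ (F.card : ℝ) * b :=
      mul_le_mul_of_nonneg_right hcard hb0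
    have halg : c * (2*(k:ℝ))^h * b = ε := by
      rw [hb, hε]
      have hc1 : ((6*m*k : ℕ) : ℝ) = (6*(m:ℝ)) * (k:ℝ) := by push_cast; ring
      rw [hc1, Real.mul_rpow (le_of_lt h6m) hk0.le,
        Real.mul_rpow (by norm_num) hk0.le]
      have : (k:ℝ)^h * (k:ℝ)^(-h) = 1 := by
        rw [← Real.rpow_add hk0]
        norm_num
      calc c * ((2:ℝ)^h * (k:ℝ)^h) * ((6*(m:ℝ))^(-h) * (k:ℝ)^(-h))
          = (c * (2:ℝ)^h * (6*(m:ℝ))^(-h)) * ((k:ℝ)^h * (k:ℝ)^(-h)) := by ring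
        _ = (c * (2:ℝ)^h * (6*(m:ℝ))^(-h)) * 1 := by rw [this]
        _ = c * (2:ℝ)^h * (6*(m:ℝ))^(-h) := by ring
    have : ε ≤ ∑ i ∈ F, I.indicator (fun i : ℕ => (i:ℝ)^(-(2*t))) i := by
      rw [← halg]
      exact hcb.trans hsumF
    linarith
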